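/- The set of nonzero degree-1 codifferentials is the union of exactly two orbits under the GL₂(K)×Kˣ action: the orbit of ((0,1),(0,0)) (the codifferential ψ^{0,1,0}_3) and the orbit of ((0,0),(1,0)) (the codifferential ψ^{0,0,1}_1); every nonzero degree-1 codifferential lies in exactly one of these two orbits, and the two orbits are disjoint. -/

import Mathlib

namespace LinfClassification

variable {K : Type*} [Field K] [CharZero K]

/-- The codifferential condition for a degree-1 structure `(u, v)`. -/
def IsCodiff1 (d : (K × K) × (K × K)) : Prop :=
  d.1.1 * d.2.1 = 0 ∧ d.1.2 * d.2.1 = 0 ∧ d.1.1 * d.2.2 = 0 ∧ d.1.2 * d.2.2 = 0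

/-- The action of `(g, q) ∈ GL₂(K) × Kˣ`, with `g = [[p, q'], [r, s]]` (so
`det g = p·s - q'·r ≠ 0`) and scalar `t ≠ 0`, on a degree-1 structure:
`(g,t)·(u,v) = (t⁻¹·(u g), t·g⁻¹ v)`, `u` a row vector and `v` a column vector. -/
def act1 (p q r s t : K) (d : (K × K) × (K × K)) : (K × K) × (K × K) :=
  ((t⁻¹ * (d.1.1 * p + d.1.2 * r), t⁻¹ * (d.1.1 * q + d.1.2 * s)),
   (t * (p * s - q * r)⁻¹ * (s * d.2.1 - q * d.2.2),
    t * (p * s - q * r)⁻¹ * (-r * d.2.1 + p * d.2.2)))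

/-- Two degree-1 structures are equivalent if they lie in the same orbit. -/
def Equiv1 (d d' : (K × K) × (K × K)) : Prop :=
  ∃ p q r s t : K, p * s - q * r ≠ 0 ∧ t ≠ 0 ∧ act1 p q r s t d = d'

/-- The codifferential `ψ^{0,1,0}_3`. -/
def N1 : (K × K) × (K × K) := ((0, 1), (0, 0))

/-- The codifferential `ψ^{0,0,1}_1`. -/
def N2 : (K × K) × (K × K) := ((0, 0), (1, 0))

lemma not_equiv_N2 (u : K × K) : ¬ Equiv1 (u, ((0 : K), (0 : K))) N2 := by
  rintro ⟨p, q, r, s, t, hdet, ht, heq⟩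
  have h := congrArg (fun x => x.2.1) heq
  simp [act1, N2] at h

lemma not_equiv_N1 (v : K × K) : ¬ Equiv1 (((0 : K), (0 : K)), v) N1 := by
  rintro ⟨p, q, r, s, t, hdet, ht, heq⟩
  have h := congrArg (fun x => x.1.2) heq
  simp [act1, N1] at h

lemma equiv_N1 (a b : K) (h : ¬ (a = 0 ∧ b = 0)) :
    Equiv1 ((a, b), ((0 : K), (0 : K))) N1 := by
  by_cases hb : b = 0
  · have ha : a ≠ 0 := fun ha => h ⟨ha, hb⟩
    refine ⟨0, a⁻¹, 1, 0, 1, by simp [ha], one_ne_zero, ?_⟩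
    simp [act1, N1, hb, mul_inv_cancel₀ ha]
  · refine ⟨1, 0, -a / b, b⁻¹, 1, by simp [hb], one_ne_zero, ?_⟩
    simp [act1, N1, mul_inv_cancel₀ hb, mul_inv_cancel_right₀ hb]
    field_simp
    ring

lemma equiv_N2 (c e : K) (h : ¬ (c = 0 ∧ e = 0)) :
    Equiv1 (((0 : K), (0 : K)), (c, e)) N2 := by
  by_cases hc : c = 0
  · have he : e ≠ 0 := fun he => h ⟨hc, he⟩
    refine ⟨0, -1, 1, 0, e⁻¹, by norm_num, inv_ne_zero he, ?_⟩
    simp [act1, N2, hc, inv_mul_cancel₀ he]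
  · refine ⟨1, 0, e / c, 1, c⁻¹, by simp, inv_ne_zero hc, ?_⟩
    simp [act1, N2, inv_mul_cancel₀ hc, mul_inv_cancel_right₀ hc]
    right; field_simp
    ring

/-- Every nonzero degree-1 codifferential lies in exactly one of the orbits of
`ψ^{0,1,0}_3` and `ψ^{0,0,1}_1`, and these two orbits are disjoint. -/
theorem degree_one_two_orbits :
    (∀ d : (K × K) × (K × K), IsCodiff1 d → d ≠ ((0, 0), (0, 0)) →
      (Equiv1 d N1 ∧ ¬ Equiv1 d N2) ∨ (Equiv1 d N2 ∧ ¬ Equiv1 d N1)) ∧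
    ¬ Equiv1 (N1 : (K × K) × (K × K)) N2 := by
  constructor
  · rintro ⟨⟨a, b⟩, ⟨c, e⟩⟩ ⟨h1, h2, h3, h4⟩ hne
    simp only at h1 h2 h3 h4
    by_cases hu : a = 0 ∧ b = 0
    · right
      obtain ⟨ha, hb⟩ := hu
      subst ha hb
      have hv : ¬ (c = 0 ∧ e = 0) := by
        rintro ⟨hc, he⟩; subst hc he; exact hne rfl
      exact ⟨equiv_N2 c e hv, not_equiv_N1 _⟩
    · left
      have hc : c = 0 := by
        rcases mul_eq_zero.mp h1 with h | h
        · rcases mul_eq_zero.mp h2 with h' | h'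
          · exact absurd ⟨h, h'⟩ hu
          · exact h'
        · exact h
      have he : e = 0 := by
        rcases mul_eq_zero.mp h3 with h | h
        · rcases mul_eq_zero.mp h4 with h' | h'
          · exact absurd ⟨h, h'⟩ hu
          · exact h'
        · exact h
      subst hc he
      exact ⟨equiv_N1 a b hu, not_equiv_N2 _⟩
  · exact not_equiv_N2 _

end LinfClassification
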